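/- (Zero Exclusion Principle for q-instability.) Let S be a monic interval polynomial of degree n such that no polynomial in S has a root on the imaginary axis (i.e., for every P ∈ S and every real ω, P(iω) ≠ 0). If some polynomial P₀ ∈ S has exactly q roots (counted with multiplicity) with positive real part and n − q roots with negative real part, then every polynomial P ∈ S has exactly q roots with positive real part and n − q roots with negative real part. -/

import Mathlib

open Polynomial

/-- Membership of a polynomial `P` in the monic interval polynomial of degree `n`
with coefficient intervals `[a k, b k]` (intervals prescribed for `k < n`). -/
def memIntervalPoly (n : ℕ) (a b : ℕ → ℝ) (P : Polynomial ℝ) : Prop :=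
  P.Monic ∧ P.natDegree = n ∧ ∀ k < n, P.coeff k ∈ Set.Icc (a k) (b k)

open scoped Classical in
/-- Number of complex roots (with multiplicity) of `P` with positive real part. -/
noncomputable def posRootCount (P : Polynomial ℝ) : ℕ :=
  Multiset.card ((P.map (algebraMap ℝ ℂ)).roots.filter fun z => 0 < z.re)

open scoped Classical in
/-- Number of complex roots (with multiplicity) of `P` with negative real part. -/
noncomputable def negRootCount (P : Polynomial ℝ) : ℕ :=
  Multiset.card ((P.map (algebraMap ℝ ℂ)).roots.filter fun z => z.re < 0)

section ZEPHelpers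
open Filter

open scoped Classical in
noncomputable def posC (p : Polynomial ℂ) : ℕ :=
  Multiset.card (p.roots.filter fun z => 0 < z.re)

lemma exists_tuple (n : ℕ) (p : Polynomial ℂ) (hm : p.Monic) (hd : p.natDegree = n) :
    ∃ w : Fin n → ℂ, p = ∏ i, (X - C (w i)) ∧ p.roots = ↑(List.ofFn w) := by
  obtain ⟨l, hl⟩ : ∃ l : List ℂ, p.roots = ↑l := ⟨p.roots.toList, (Multiset.coe_toList _).symm⟩
  have hlen : l.length = n := by
    rw [← hd, ← splits_iff_card_roots.mp (IsAlgClosed.splits p), hl]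
    simp
  subst hlen
  refine ⟨l.get, ?_, by rw [hl, List.ofFn_get]⟩
  conv_lhs => rw [(IsAlgClosed.splits p).eq_prod_roots_of_monic hm]
  rw [hl]
  rw [Multiset.map_coe, Multiset.prod_coe]
  conv_lhs => rw [show l = List.ofFn l.get from (List.ofFn_get l).symm]
  rw [List.map_ofFn, List.prod_ofFn]
  simp [Function.comp]


lemma roots_prod_fin {n : ℕ} (w : Fin n → ℂ) :
    (∏ i, (X - C (w i))).roots = ↑(List.ofFn w) := by
  have h : (∏ i, (X - C (w i))) =
      ((↑(List.ofFn w) : Multiset ℂ).map fun a => X - C a).prod := by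
    rw [Multiset.map_coe, Multiset.prod_coe, List.map_ofFn, List.prod_ofFn]
    simp [Function.comp]
  rw [h, roots_multiset_prod_X_sub_C]

lemma card_filter_ofFn {n : ℕ} (w : Fin n → ℂ) (pr : ℂ → Prop) [DecidablePred pr] :
    Multiset.card (Multiset.filter pr ↑(List.ofFn w)) =
      Multiset.card (Multiset.filter (fun i => pr (w i)) ↑(List.finRange n)) := by
  rw [List.ofFn_eq_map, ← Multiset.map_coe, Multiset.filter_map, Multiset.card_map]
  rfl

lemma root_norm_le (p : Polynomial ℂ) (hm : p.Monic) {z : ℂ} (hz : z ∈ p.roots) :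
    ‖z‖ ≤ 1 + ∑ j ∈ Finset.range p.natDegree, ‖p.coeff j‖ := by
  obtain ⟨hne, hroot⟩ := Polynomial.mem_roots'.mp hz
  have h2 := Polynomial.IsRoot.norm_lt_cauchyBound hne hroot
  have h3 : (p.cauchyBound : ℝ) ≤ 1 + ∑ j ∈ Finset.range p.natDegree, ‖p.coeff j‖ := by
    rw [cauchyBound, hm.leadingCoeff, nnnorm_one, div_one]
    have h4 : Finset.sup (Finset.range p.natDegree) (‖p.coeff ·‖₊) ≤
        ∑ j ∈ Finset.range p.natDegree, ‖p.coeff j‖₊ := by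
      apply Finset.sup_le
      intro j hj
      exact Finset.single_le_sum (f := fun j => ‖p.coeff j‖₊) (fun _ _ => zero_le) hj
    calc ((Finset.sup (Finset.range p.natDegree) (‖p.coeff ·‖₊) + 1 : NNReal) : ℝ)
        ≤ ((∑ j ∈ Finset.range p.natDegree, ‖p.coeff j‖₊ + 1 : NNReal) : ℝ) := by
          exact_mod_cast add_le_add_left h4 1
      _ = 1 + ∑ j ∈ Finset.range p.natDegree, ‖p.coeff j‖ := by
          push_cast; ring
  calc ‖z‖ ≤ (p.cauchyBound : ℝ) := by exact_mod_cast h2.le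
    _ ≤ _ := h3

open scoped Classical in
lemma posC_add_negC (n : ℕ) (p : Polynomial ℂ) (hm : p.Monic) (hd : p.natDegree = n)
    (hz : ∀ z ∈ p.roots, z.re ≠ 0) :
    Multiset.card (p.roots.filter fun z => 0 < z.re) +
      Multiset.card (p.roots.filter fun z => z.re < 0) = n := by
  have hcard : Multiset.card p.roots = n := by
    rw [splits_iff_card_roots.mp (IsAlgClosed.splits p), hd]
  have h1 : p.roots.filter (fun z => z.re < 0) = p.roots.filter (fun z => ¬ 0 < z.re) :=
    Multiset.filter_congr fun z hzm => by
      constructor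
      · intro h; linarith
      · intro h; exact lt_of_le_of_ne (not_lt.mp h) (hz z hzm)
  rw [h1, ← Multiset.card_add, Multiset.filter_add_not, hcard]

open scoped Classical in
lemma eventually_posC (n : ℕ) (h : ℝ → Polynomial ℂ) (hm : ∀ t, (h t).Monic)
    (hd : ∀ t, (h t).natDegree = n) (hc : ∀ k, Continuous fun t => (h t).coeff k)
    (t₀ : ℝ) (hzr : ∀ z ∈ (h t₀).roots, z.re ≠ 0) :
    ∀ᶠ t in nhds t₀, posC (h t) = posC (h t₀) := by
  by_contra hcon
  rw [Filter.not_eventually] at hcon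
  -- extract a bad sequence converging to t₀
  have hseq : ∀ k : ℕ, ∃ s : ℝ, dist s t₀ < 1 / (k + 1) ∧ posC (h s) ≠ posC (h t₀) := by
    intro k
    obtain ⟨s, hbad, hs⟩ :=
      (hcon.and_eventually (Metric.ball_mem_nhds t₀ (by positivity : (0:ℝ) < 1 / (k + 1)))).exists
    exact ⟨s, by simpa [Metric.mem_ball] using hs, hbad⟩
  choose t hdist hbad using hseq
  have htt : Tendsto t atTop (nhds t₀) := by
    rw [tendsto_iff_dist_tendsto_zero]
    exact squeeze_zero (fun k => dist_nonneg) (fun k => (hdist k).le)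
      tendsto_one_div_add_atTop_nhds_zero_nat
  -- root tuples
  choose z hzprod hzroots using fun k => exists_tuple n (h (t k)) (hm (t k)) (hd (t k))
  -- uniform bound on roots
  set g : ℝ → ℝ := fun s => 1 + ∑ j ∈ Finset.range n, ‖(h s).coeff j‖ with hg
  have hgc : Continuous g := by
    apply continuous_const.add
    exact continuous_finset_sum _ fun j _ => (hc j).norm
  obtain ⟨R, hR⟩ := ((hgc.tendsto t₀).comp htt).bddAbove_range
  have hRk : ∀ k, g (t k) ≤ R := fun k => hR ⟨k, rfl⟩
  have hR0 : (0:ℝ) ≤ R := le_trans (by positivity) ((by positivity : (0:ℝ) ≤ _).trans (hRk 0))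
  have hzb : ∀ k i, ‖z k i‖ ≤ R := by
    intro k i
    have hmem : z k i ∈ (h (t k)).roots := by
      rw [hzroots k]
      exact Multiset.mem_coe.mpr (List.mem_ofFn.mpr ⟨i, rfl⟩)
    have := root_norm_le (h (t k)) (hm (t k)) hmem
    rw [hd (t k)] at this
    exact this.trans (hRk k)
  have hball : ∀ k, z k ∈ Metric.closedBall (0 : Fin n → ℂ) R := by
    intro k
    rw [Metric.mem_closedBall, dist_zero_right]
    exact (pi_norm_le_iff_of_nonneg hR0).mpr (hzb k)
  obtain ⟨wlim, -, φ, hφ, hwt⟩ :=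
    tendsto_subseq_of_bounded Metric.isBounded_closedBall hball
  have htphi : Tendsto (fun k => t (φ k)) atTop (nhds t₀) := htt.comp hφ.tendsto_atTop
  -- identify the limit polynomial
  have hteval : ∀ x : ℂ, Continuous fun s => (h s).eval x := by
    intro x
    have he : (fun s => (h s).eval x)
        = fun s => ∑ j ∈ Finset.range (n + 1), (h s).coeff j * x ^ j := by
      funext s
      exact eval_eq_sum_range' (lt_of_le_of_lt (le_of_eq (hd s)) (Nat.lt_succ_self n)) x
    rw [he]
    exact continuous_finset_sum _ fun j _ => ((hc j).mul continuous_const)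
  have hkey : h t₀ = ∏ i, (X - C (wlim i)) := by
    apply Polynomial.funext
    intro x
    have h1 : Tendsto (fun k => (h (t (φ k))).eval x) atTop (nhds ((h t₀).eval x)) :=
      ((hteval x).tendsto t₀).comp htphi
    have h2 : Tendsto (fun k => (h (t (φ k))).eval x) atTop (nhds (∏ i, (x - wlim i))) := by
      have he : ∀ k, (h (t (φ k))).eval x = ∏ i, (x - z (φ k) i) := by
        intro k
        rw [hzprod (φ k)]
        simp [eval_prod]
      rw [show (fun k => (h (t (φ k))).eval x) = fun k => ∏ i, (x - z (φ k) i) from funext he]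
      apply tendsto_finset_prod
      intro i _
      exact tendsto_const_nhds.sub (((continuous_apply i).tendsto wlim).comp hwt)
    have := tendsto_nhds_unique h1 h2
    rw [this]
    simp [eval_prod]
  have hroots0 : (h t₀).roots = ↑(List.ofFn wlim) := by rw [hkey]; exact roots_prod_fin wlim
  have hre : ∀ i, (wlim i).re ≠ 0 := by
    intro i
    exact hzr _ (by rw [hroots0]; exact Multiset.mem_coe.mpr (List.mem_ofFn.mpr ⟨i, rfl⟩))
  have hev : ∀ᶠ k in atTop, ∀ i, (0 < (z (φ k) i).re ↔ 0 < (wlim i).re) := by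
    rw [eventually_all]
    intro i
    have hci : Tendsto (fun k => (z (φ k) i).re) atTop (nhds (wlim i).re) :=
      (Complex.continuous_re.tendsto _).comp (((continuous_apply i).tendsto wlim).comp hwt)
    rcases lt_or_gt_of_ne (hre i) with hlt | hgt
    · filter_upwards [hci.eventually (eventually_lt_nhds hlt)] with k hk
      constructor
      · intro hp; linarith
      · intro hp; linarith
    · filter_upwards [hci.eventually (eventually_gt_nhds hgt)] with k hk
      exact ⟨fun _ => hgt, fun _ => hk⟩
  obtain ⟨k, hk⟩ := hev.exists
  apply hbad (φ k)
  calc posC (h (t (φ k)))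
      = Multiset.card (Multiset.filter (fun i => 0 < ((z (φ k)) i).re) ↑(List.finRange n)) := by
        rw [posC, hzroots (φ k), card_filter_ofFn]
    _ = Multiset.card (Multiset.filter (fun i => 0 < (wlim i).re) ↑(List.finRange n)) := by
        congr 1
        exact Multiset.filter_congr fun i _ => hk i
    _ = posC (h t₀) := by rw [posC, hroots0, card_filter_ofFn]


end ZEPHelpers

open Filter

/-- Zero Exclusion Principle for `q`-instability: if no member of the monic interval
polynomial has a purely imaginary root and one member has exactly `q` roots in the open
right half-plane and `n - q` in the open left half-plane, then so does every member. -/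
theorem zero_exclusion_principle (n q : ℕ) (a b : ℕ → ℝ)
    (hno : ∀ P : Polynomial ℝ, memIntervalPoly n a b P →
      ∀ ω : ℝ, (P.map (algebraMap ℝ ℂ)).eval (ω * Complex.I) ≠ 0)
    (P₀ : Polynomial ℝ) (hP₀ : memIntervalPoly n a b P₀)
    (hpos₀ : posRootCount P₀ = q) (hneg₀ : negRootCount P₀ = n - q) :
    ∀ P : Polynomial ℝ, memIntervalPoly n a b P →
      posRootCount P = q ∧ negRootCount P = n - q := by
  intro P hP
  obtain ⟨hm0, hd0, hco0⟩ := hP₀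
  obtain ⟨hm1, hd1, hco1⟩ := hP
  set Q : ℝ → Polynomial ℝ := fun t => (1 - t) • P₀ + t • P with hQdef
  have hQcoeff : ∀ t k, (Q t).coeff k = (1 - t) * P₀.coeff k + t * P.coeff k := by
    intro t k; simp [hQdef, coeff_smul, smul_eq_mul]
  have hc0n : P₀.coeff n = 1 := by rw [← hd0]; exact hm0.coeff_natDegree
  have hc1n : P.coeff n = 1 := by rw [← hd1]; exact hm1.coeff_natDegree
  have hQn : ∀ t, (Q t).coeff n = 1 := by intro t; rw [hQcoeff, hc0n, hc1n]; ring
  have hQdle : ∀ t, (Q t).natDegree ≤ n := by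
    intro t
    refine le_trans (natDegree_add_le _ _) (max_le ?_ ?_)
    · exact le_trans (natDegree_smul_le _ _) hd0.le
    · exact le_trans (natDegree_smul_le _ _) hd1.le
  have hQm : ∀ t, (Q t).Monic := fun t =>
    monic_of_natDegree_le_of_coeff_eq_one n (hQdle t) (hQn t)
  have hQd : ∀ t, (Q t).natDegree = n := fun t =>
    le_antisymm (hQdle t) (le_natDegree_of_ne_zero (by rw [hQn t]; exact one_ne_zero))
  have hQmem : ∀ t ∈ Set.Icc (0:ℝ) 1, memIntervalPoly n a b (Q t) := by
    intro t ht
    refine ⟨hQm t, hQd t, fun k hk => ?_⟩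
    rw [hQcoeff]
    have := (convex_Icc (a k) (b k)) (hco0 k hk) (hco1 k hk)
      (by linarith [ht.2] : (0:ℝ) ≤ 1 - t) ht.1 (by ring)
    simpa [smul_eq_mul] using this
  set H : ℝ → Polynomial ℂ := fun t => (Q t).map (algebraMap ℝ ℂ) with hHdef
  have hHm : ∀ t, (H t).Monic := fun t => (hQm t).map _
  have hHd : ∀ t, (H t).natDegree = n := by
    intro t; rw [hHdef]; rw [(hQm t).natDegree_map]; exact hQd t
  have hHc : ∀ k, Continuous fun t => (H t).coeff k := by
    intro k
    have he : (fun t => (H t).coeff k)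
        = fun t => ((((1 - t) * P₀.coeff k + t * P.coeff k : ℝ)) : ℂ) := by
      funext t; rw [hHdef]; rw [coeff_map, hQcoeff]; rfl
    rw [he]
    exact Complex.continuous_ofReal.comp (by continuity)
  have hzero : ∀ t ∈ Set.Icc (0:ℝ) 1, ∀ z ∈ (H t).roots, z.re ≠ 0 := by
    intro t ht z hzr h0
    have hroot : (H t).eval z = 0 := (Polynomial.mem_roots'.mp hzr).2
    have hzi : ((z.im : ℂ) * Complex.I) = z := by
      rw [Complex.ext_iff]; constructor <;> simp [h0]
    exact hno (Q t) (hQmem t ht) z.im (by rw [hzi]; exact hroot)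
  -- local constancy on the segment
  have hloc : ∀ t ∈ Set.Icc (0:ℝ) 1, ∀ᶠ s in nhds t, posC (H s) = posC (H t) :=
    fun t ht => eventually_posC n H hHm hHd hHc t (hzero t ht)
  haveI hPre : PreconnectedSpace (Set.Icc (0:ℝ) 1) :=
    Subtype.preconnectedSpace isPreconnected_Icc
  have hlc : IsLocallyConstant (fun x : Set.Icc (0:ℝ) 1 => posC (H x.val)) := by
    rw [IsLocallyConstant.iff_exists_open]
    intro x
    obtain ⟨V, hV, hVo, hxV⟩ := eventually_nhds_iff.mp (hloc x.val x.2)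
    exact ⟨Subtype.val ⁻¹' V, hVo.preimage continuous_subtype_val, hxV,
      fun y hy => hV y.1 hy⟩
  have h01 : posC (H 1) = posC (H 0) :=
    hlc.apply_eq_of_preconnectedSpace ⟨1, by norm_num⟩ ⟨0, by norm_num⟩
  have hQ0 : Q 0 = P₀ := by simp [hQdef]
  have hQ1 : Q 1 = P := by simp [hQdef]
  have e0 : posC (H 0) = posRootCount P₀ := by rw [hHdef]; simp only; rw [hQ0]; rfl
  have e1 : posC (H 1) = posRootCount P := by rw [hHdef]; simp only; rw [hQ1]; rfl
  have hposP : posRootCount P = q := by rw [← e1, h01, e0, hpos₀]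
  refine ⟨hposP, ?_⟩
  have hsum := posC_add_negC n (P.map (algebraMap ℝ ℂ)) (hm1.map _)
    (by rw [hm1.natDegree_map]; exact hd1)
    (by
      have := hzero 1 (by norm_num)
      rw [hHdef] at this
      simp only at this
      rw [hQ1] at this
      exact this)
  have hposle : posRootCount P + negRootCount P = n := hsum
  omega
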